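/- Let n_s ≥ 2, let Δs_0, …, Δs_{n_s-1} > 0, K_∥ > 0, γ ≥ 0, Δt > 0. Suppose (T_i^n)_{0≤i≤n_s-1, n∈ℕ} satisfies the implicit finite volume scheme (T_i^{n+1} − T_i^n)/Δt = (F_{i+1/2}^{n+1} − F_{i−1/2}^{n+1})/Δs_i, where for 0 ≤ i ≤ n_s−2, F_{i+1/2}^{n+1} = (4K_∥/7)·(|T_{i+1}^{n+1}|^{5/2} T_{i+1}^{n+1} − |T_i^{n+1}|^{5/2} T_i^{n+1})/(Δs_{i+1} + Δs_i), and F_{−1/2}^{n+1} = γ T_0^{n+1}, F_{n_s−1/2}^{n+1} = −γ T_{n_s−1}^{n+1}. If T_i^0 ≥ 0 for all i, then T_i^n ≥ 0 for all 0 ≤ i ≤ n_s−1 and all n ∈ ℕ. -/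
import Mathlib

lemma phi_mono : Monotone (fun x : ℝ => |x| ^ ((5:ℝ)/2) * x) := by
  intro a b hab
  simp only
  rcases le_total 0 a with ha | ha
  · have hb : 0 ≤ b := ha.trans hab
    have h1 : |a| ^ ((5:ℝ)/2) ≤ |b| ^ ((5:ℝ)/2) := by
      apply Real.rpow_le_rpow (abs_nonneg a)
      · rw [abs_of_nonneg ha, abs_of_nonneg hb]; exact hab
      · norm_num
    exact mul_le_mul h1 hab ha (Real.rpow_nonneg (abs_nonneg b) _)
  · rcases le_total 0 b with hb | hb
    · have h1 : |a| ^ ((5:ℝ)/2) * a ≤ 0 :=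
        mul_nonpos_of_nonneg_of_nonpos (Real.rpow_nonneg (abs_nonneg a) _) ha
      have h2 : 0 ≤ |b| ^ ((5:ℝ)/2) * b :=
        mul_nonneg (Real.rpow_nonneg (abs_nonneg b) _) hb
      linarith
    · have h1 : |b| ^ ((5:ℝ)/2) ≤ |a| ^ ((5:ℝ)/2) := by
        apply Real.rpow_le_rpow (abs_nonneg b)
        · rw [abs_of_nonpos ha, abs_of_nonpos hb]; linarith
        · norm_num
      have h2 : 0 ≤ |b| ^ ((5:ℝ)/2) := Real.rpow_nonneg (abs_nonneg b) _
      nlinarith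

/-- Nonnegativity part of Proposition 2.2: the backward Euler (implicit)
finite volume scheme for the 1D nonlinear heat equation preserves
nonnegativity of the initial datum, unconditionally in `Δt`.
Here `F n i` denotes the numerical flux `F_{i-1/2}^n` computed from the
values at time level `n` (so interior fluxes correspond to `1 ≤ i ≤ ns - 1`,
and `F n 0`, `F n ns` are the boundary fluxes). -/
theorem implicit_scheme_nonnegativity
    (ns : ℕ) (hns : 2 ≤ ns)
    (Δs : ℕ → ℝ) (hΔs : ∀ i < ns, 0 < Δs i)
    (K γ Δt : ℝ) (hK : 0 < K) (hγ : 0 ≤ γ) (hΔt : 0 < Δt)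
    (T F : ℕ → ℕ → ℝ)
    (hF0 : ∀ n, F n 0 = γ * T n 0)
    (hFns : ∀ n, F n ns = -γ * T n (ns - 1))
    (hFint : ∀ n i, 1 ≤ i → i ≤ ns - 1 →
      F n i = (4 * K / 7) *
        (|T n i| ^ ((5:ℝ)/2) * T n i - |T n (i-1)| ^ ((5:ℝ)/2) * T n (i-1))
        / (Δs i + Δs (i-1)))
    (hscheme : ∀ n, ∀ i < ns,
      (T (n+1) i - T n i) / Δt = (F (n+1) (i+1) - F (n+1) i) / Δs i)
    (hinit : ∀ i < ns, 0 ≤ T 0 i) :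
    ∀ n, ∀ i < ns, 0 ≤ T n i := by
  intro n
  induction n with
  | zero => exact hinit
  | succ n ih =>
    -- find the minimizing index at time n+1
    obtain ⟨i₀, hi₀mem, hmin⟩ := Finset.exists_min_image (Finset.range ns)
      (T (n+1)) ⟨0, Finset.mem_range.mpr (by omega)⟩
    have hi₀ : i₀ < ns := Finset.mem_range.mp hi₀mem
    suffices h : 0 ≤ T (n+1) i₀ by
      intro i hi
      exact h.trans (hmin i (Finset.mem_range.mpr hi))
    by_contra hneg
    push_neg at hneg
    have hc : (0:ℝ) < 4 * K / 7 := by positivity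
    -- Claim A : F (n+1) i₀ ≤ 0
    have hA : F (n+1) i₀ ≤ 0 := by
      rcases Nat.eq_zero_or_pos i₀ with h0 | h0
      · rw [h0, hF0]
        exact mul_nonpos_of_nonneg_of_nonpos hγ (h0 ▸ hneg).le
      · have h1 : i₀ ≤ ns - 1 := by omega
        rw [hFint (n+1) i₀ h0 h1]
        apply div_nonpos_of_nonpos_of_nonneg
        · apply mul_nonpos_of_nonneg_of_nonpos hc.le
          have := phi_mono (hmin (i₀ - 1) (Finset.mem_range.mpr (by omega)))
          simpa using by linarith [this]
        · have := hΔs i₀ hi₀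
          have := hΔs (i₀ - 1) (by omega)
          linarith
    -- Claim B : 0 ≤ F (n+1) (i₀+1)
    have hB : 0 ≤ F (n+1) (i₀+1) := by
      rcases eq_or_lt_of_le (Nat.succ_le_of_lt hi₀) with h0 | h0
      · rw [show i₀ + 1 = ns from h0, hFns]
        have : T (n+1) (ns - 1) = T (n+1) i₀ := by rw [show ns - 1 = i₀ by omega]
        rw [this]
        nlinarith
      · have h1 : 1 ≤ i₀ + 1 := by omega
        have h2 : i₀ + 1 ≤ ns - 1 := by omega
        rw [hFint (n+1) (i₀+1) h1 h2]
        apply div_nonneg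
        · apply mul_nonneg hc.le
          have := phi_mono (hmin (i₀ + 1) (Finset.mem_range.mpr (by omega)))
          simpa using by linarith [this]
        · have := hΔs (i₀ + 1) (by omega)
          have := hΔs i₀ hi₀
          simp only [Nat.add_sub_cancel]
          linarith
    -- conclude
    have hs := hscheme n i₀ hi₀
    have hΔsi : 0 < Δs i₀ := hΔs i₀ hi₀
    have hrhs : 0 ≤ (F (n+1) (i₀+1) - F (n+1) i₀) / Δs i₀ :=
      div_nonneg (by linarith) hΔsi.le
    have hTn : 0 ≤ T n i₀ := ih i₀ hi₀
    have : 0 ≤ (T (n+1) i₀ - T n i₀) / Δt := hs ▸ hrhs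
    have := (div_nonneg_iff.mp this)
    rcases this with ⟨h, _⟩ | ⟨_, h⟩
    · linarith
    · linarith
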